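/- Let R be an integral domain admitting a uniquely Euclidean function f. Then either R is a field, or there exists a field K such that R is isomorphic as a ring to the polynomial ring K[x]. -/

import Mathlib

/-- `f` is a Euclidean function on `R`: for all `a b : R` with `b ≠ 0`, there exist
`q, r` with `a = q * b + r` and (`r = 0` or `f r < f b`). -/
def IsEuclideanFn {R : Type*} [CommRing R] (f : R → ℕ) : Prop :=
  ∀ a b : R, b ≠ 0 → ∃ q r : R, a = q * b + r ∧ (r = 0 ∨ f r < f b)

/-- `f` is strongly Euclidean: Euclidean, and `f a ≤ f (a * b)` for nonzero `a, b`. -/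
def IsStronglyEuclideanFn {R : Type*} [CommRing R] (f : R → ℕ) : Prop :=
  IsEuclideanFn f ∧ ∀ a b : R, a ≠ 0 → b ≠ 0 → f a ≤ f (a * b)

/-- `f` is ultra-Euclidean: Euclidean, and `f (a + b) ≤ max (f a) (f b)` for nonzero
`a, b` with `a + b ≠ 0`. -/
def IsUltraEuclideanFn {R : Type*} [CommRing R] (f : R → ℕ) : Prop :=
  IsEuclideanFn f ∧ ∀ a b : R, a ≠ 0 → b ≠ 0 → a + b ≠ 0 → f (a + b) ≤ max (f a) (f b)

/-- `f` is uniquely Euclidean: for all `a b : R` with `b ≠ 0`, there is a *unique* pair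
`(q, r)` with `a = q * b + r` and (`r = 0` or `f r < f b`). -/
def IsUniquelyEuclideanFn {R : Type*} [CommRing R] (f : R → ℕ) : Prop :=
  ∀ a b : R, b ≠ 0 → ∃! qr : R × R, a = qr.1 * b + qr.2 ∧ (qr.2 = 0 ∨ f qr.2 < f b)

/-- The refinement of `f`: `f̃ a` is the minimum of `f (a * b)` over nonzero `b`. -/
noncomputable def refinement {R : Type*} [CommRing R] (f : R → ℕ) (a : R) : ℕ :=
  sInf {n : ℕ | ∃ b : R, b ≠ 0 ∧ f (a * b) = n}

set_option linter.unusedSectionVars false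
set_option linter.unusedVariables false
set_option maxHeartbeats 1000000

section Aux
variable {R : Type*} [CommRing R] [IsDomain R] {f : R → ℕ}

lemma aux_L1 (hf : IsUniquelyEuclideanFn f) {q b r : R} (hq : q ≠ 0) (hb : b ≠ 0)
    (hr : r = 0 ∨ f r < f b) : ¬(q * b + r = 0 ∨ f (q * b + r) < f b) := by
  intro h
  obtain ⟨qr, -, huniq⟩ := hf (q * b + r) b hb
  have h1 : ((q, r) : R × R) = qr := huniq (q, r) ⟨rfl, hr⟩
  have h2 : ((0, q * b + r) : R × R) = qr := huniq (0, q * b + r) ⟨by ring, h⟩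
  exact hq ((Prod.ext_iff.mp (h1.trans h2.symm)).1)

lemma aux_mul_mono (hf : IsUniquelyEuclideanFn f) {q b : R} (hq : q ≠ 0) (hb : b ≠ 0) :
    f b ≤ f (q * b) := by
  have h := aux_L1 hf hq hb (Or.inl rfl)
  rw [add_zero] at h
  push_neg at h
  exact h.2

lemma aux_neg (hf : IsUniquelyEuclideanFn f) {a : R} (ha : a ≠ 0) : f (-a) = f a := by
  have hm1 : (-1 : R) ≠ 0 := neg_ne_zero.mpr one_ne_zero
  have h1 : f a ≤ f (-a) := by
    have := aux_mul_mono hf hm1 ha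
    rwa [neg_one_mul] at this
  have h2 : f (-a) ≤ f a := by
    have := aux_mul_mono hf hm1 (neg_ne_zero.mpr ha)
    rwa [neg_one_mul, neg_neg] at this
  exact le_antisymm h2 h1

lemma aux_ultra (hf : IsUniquelyEuclideanFn f) {a b : R} (ha : a ≠ 0) (hb : b ≠ 0)
    (hab : a + b ≠ 0) : f (a + b) ≤ max (f a) (f b) := by
  by_contra h
  push_neg at h
  obtain ⟨qr, -, huniq⟩ := hf a (a + b) hab
  have h1 : ((0, a) : R × R) = qr :=
    huniq (0, a) ⟨by ring, Or.inr (lt_of_le_of_lt (le_max_left _ _) h)⟩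
  have h2 : ((1, -b) : R × R) = qr :=
    huniq (1, -b) ⟨by ring, Or.inr (by rw [aux_neg hf hb]; exact lt_of_le_of_lt (le_max_right _ _) h)⟩
  have : (0 : R) = 1 := (Prod.ext_iff.mp (h1.trans h2.symm)).1
  exact zero_ne_one this

lemma aux_min (hf : IsUniquelyEuclideanFn f) {a : R} (ha : a ≠ 0) : f 1 ≤ f a := by
  have := aux_mul_mono hf ha (one_ne_zero (α := R))
  rwa [mul_one] at this

lemma aux_unit_iff (hf : IsUniquelyEuclideanFn f) {a : R} (ha : a ≠ 0) :
    IsUnit a ↔ f a ≤ f 1 := by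
  constructor
  · rintro ⟨u, rfl⟩
    have := aux_mul_mono hf (u⁻¹).isUnit.ne_zero u.isUnit.ne_zero
    rwa [Units.inv_mul] at this
  · intro hle
    obtain ⟨⟨q, r⟩, ⟨hdiv, hr⟩, -⟩ := hf 1 a ha
    dsimp only at hdiv hr
    by_cases hr0 : r = 0
    · rw [hr0, add_zero] at hdiv
      exact IsUnit.of_mul_eq_one (a := a) q (by rw [mul_comm]; exact hdiv.symm)
    · exfalso
      have hrlt : f r < f a := by tauto
      have h1 : f 1 ≤ f r := aux_min hf hr0
      omega

lemma aux_strict (hf : IsUniquelyEuclideanFn f) {q b : R} (hq : q ≠ 0) (hb : b ≠ 0)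
    (hbu : ¬ IsUnit b) : f q < f (q * b) := by
  rcases lt_or_ge (f q) (f (q * b)) with h | h
  · exact h
  exfalso
  have hle : f q ≤ f (q * b) := by
    have := aux_mul_mono hf hb hq
    rwa [mul_comm] at this
  have heq : f (q * b) = f q := le_antisymm h hle
  obtain ⟨⟨c, r⟩, ⟨hdiv, hr⟩, -⟩ := hf q (q * b) (mul_ne_zero hq hb)
  dsimp only at hdiv hr
  by_cases hr0 : r = 0
  · rw [hr0, add_zero] at hdiv
    apply hbu
    refine IsUnit.of_mul_eq_one (a := b) c ?_
    have : q * (b * c) = q * 1 := by linear_combination -hdiv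
    exact mul_left_cancel₀ hq this
  · have hrlt : f r < f q := by rw [heq] at hr; tauto
    have hfac : r = q * (1 - c * b) := by linear_combination -hdiv
    have hne : (1 - c * b) ≠ 0 := by
      intro h0; rw [h0, mul_zero] at hfac; exact hr0 hfac
    have : f q ≤ f r := by
      rw [hfac, mul_comm]
      exact aux_mul_mono hf hne hq
    omega

end Aux

universe u

theorem uniquely_euclidean_implies_K_or_Kx {R : Type u} [CommRing R] [IsDomain R]
    (f : R → ℕ) (hf : IsUniquelyEuclideanFn f) :
    IsField R ∨ ∃ (K : Type u) (_ : Field K), Nonempty (R ≃+* Polynomial K) := by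
  classical
  by_cases hFld : ∀ a : R, a ≠ 0 → IsUnit a
  · left
    exact ⟨exists_pair_ne R, mul_comm, fun {a} ha => (hFld a ha).exists_right_inv⟩
  right
  push_neg at hFld
  obtain ⟨x0, hx0ne, hx0nu⟩ := hFld
  -- the subring of constants
  have hadd : ∀ a b : R, (a = 0 ∨ IsUnit a) → (b = 0 ∨ IsUnit b) → (a + b = 0 ∨ IsUnit (a + b)) := by
    rintro a b (rfl | ha) (rfl | hb)
    · left; rw [add_zero]
    · right; rwa [zero_add]
    · right; rwa [add_zero]
    · by_cases hab : a + b = 0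
      · left; exact hab
      · right
        rw [aux_unit_iff hf hab]
        calc f (a + b) ≤ max (f a) (f b) := aux_ultra hf ha.ne_zero hb.ne_zero hab
          _ ≤ f 1 := by
              apply max_le
              · exact (aux_unit_iff hf ha.ne_zero).mp ha
              · exact (aux_unit_iff hf hb.ne_zero).mp hb
  let S : Subring R :=
    { carrier := {a | a = 0 ∨ IsUnit a}
      zero_mem' := Or.inl rfl
      one_mem' := Or.inr isUnit_one
      add_mem' := fun {a b} ha hb => hadd a b ha hb
      neg_mem' := fun {a} ha => by
        rcases ha with rfl | ha
        · left; rw [neg_zero]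
        · right; exact ha.neg
      mul_mem' := fun {a b} ha hb => by
        rcases ha with rfl | ha
        · left; rw [zero_mul]
        rcases hb with rfl | hb
        · left; rw [mul_zero]
        · right; exact ha.mul hb }
  have hSfield : IsField S := by
    refine ⟨⟨0, 1, ?_⟩, mul_comm, ?_⟩
    · intro h
      exact zero_ne_one (congrArg Subtype.val h)
    · rintro ⟨a, ha⟩ hane
      have ha' : IsUnit a := by
        rcases ha with rfl | h
        · exact absurd (Subtype.ext rfl) hane
        · exact h
      obtain ⟨u, rfl⟩ := ha'
      refine ⟨⟨(u⁻¹ : Rˣ), Or.inr (u⁻¹).isUnit⟩, ?_⟩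
      exact Subtype.ext (u.mul_inv)
  letI : Field S := hSfield.toField
  -- choose x of minimal f among nonzero nonunits
  set T : Set ℕ := {n | ∃ a : R, a ≠ 0 ∧ ¬ IsUnit a ∧ f a = n} with hT
  have hTne : T.Nonempty := ⟨f x0, x0, hx0ne, hx0nu, rfl⟩
  obtain ⟨x, hxne, hxnu, hfx⟩ := Nat.sInf_mem hTne
  have hxmin : ∀ a : R, a ≠ 0 → ¬ IsUnit a → f x ≤ f a := by
    intro a ha hu
    rw [hfx]
    exact Nat.sInf_le ⟨a, ha, hu, rfl⟩
  have hrem : ∀ r : R, (r = 0 ∨ f r < f x) → r ∈ S := by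
    rintro r (rfl | hlt)
    · exact S.zero_mem
    by_cases hr0 : r = 0
    · rw [hr0]; exact S.zero_mem
    right
    by_contra hu
    exact absurd (hxmin r hr0 hu) (by omega)
  let φ : Polynomial S →+* R := Polynomial.eval₂RingHom S.subtype x
  have hφC : ∀ c : S, φ (Polynomial.C c) = (c : R) := fun c => Polynomial.eval₂_C _ _
  have hφX : φ Polynomial.X = x := Polynomial.eval₂_X _ _
  -- surjectivity
  have hsurj : Function.Surjective φ := by
    have key : ∀ n : ℕ, ∀ a : R, f a = n → ∃ p, φ p = a := by
      intro n
      induction n using Nat.strong_induction_on with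
      | _ n ih =>
        intro a hfa
        by_cases ha0 : a = 0
        · exact ⟨0, by rw [map_zero, ha0]⟩
        obtain ⟨⟨q, r⟩, ⟨hdiv, hr⟩, -⟩ := hf a x hxne
        dsimp only at hdiv hr
        have hrS : r ∈ S := hrem r hr
        by_cases hq0 : q = 0
        · refine ⟨Polynomial.C ⟨r, hrS⟩, ?_⟩
          rw [hφC]
          rw [hdiv, hq0, zero_mul, zero_add]
        · -- f q < f a
          have h1 : f q < f (q * x) := aux_strict hf hq0 hxne hxnu
          have h2 : f (q * x) ≤ f a := by
            by_cases hr0 : r = 0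
            · rw [hdiv, hr0, add_zero]
            · have hrlt : f r < f x := by tauto
              have hqx : q * x ≠ 0 := mul_ne_zero hq0 hxne
              have hfa_ge : f x ≤ f a := by
                have := aux_L1 hf hq0 hxne hr
                push_neg at this
                rw [← hdiv] at this
                exact this.2
              have hsum : a + -r = q * x := by linear_combination hdiv
              have hult := aux_ultra hf ha0 (neg_ne_zero.mpr hr0) (by rw [hsum]; exact hqx)
              rw [hsum, aux_neg hf hr0] at hult
              have : f r < f a := lt_of_lt_of_le hrlt hfa_ge
              omega
          obtain ⟨p, hp⟩ := ih (f q) (by omega) q rfl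
          refine ⟨p * Polynomial.X + Polynomial.C ⟨r, hrS⟩, ?_⟩
          rw [map_add, map_mul, hφC, hφX, hp, hdiv]
    intro a
    obtain ⟨p, hp⟩ := key (f a) a rfl
    exact ⟨p, hp⟩
  -- injectivity
  have hinj : Function.Injective φ := by
    rw [injective_iff_map_eq_zero]
    intro p hp
    by_contra hpne
    -- strong induction on natDegree
    have key : ∀ n : ℕ, ∀ p : Polynomial S, p.natDegree = n → φ p = 0 → p = 0 := by
      intro n
      induction n using Nat.strong_induction_on with
      | _ n ih =>
        intro p hdeg hp0
        have hsplit : Polynomial.X * p.divX + Polynomial.C (p.coeff 0) = p :=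
          Polynomial.X_mul_divX_add p
        have heval : x * φ p.divX + ((p.coeff 0 : S) : R) = 0 := by
          rw [← hp0]
          conv_rhs => rw [← hsplit]
          rw [map_add, map_mul, hφX, hφC]
        have hc0 : p.coeff 0 = 0 := by
          by_contra hc
          have hcS : ((p.coeff 0 : S) : R) = 0 ∨ IsUnit ((p.coeff 0 : S) : R) := (p.coeff 0).2
          have hcne : ((p.coeff 0 : S) : R) ≠ 0 := fun h => hc (Subtype.ext h)
          have hcu : IsUnit ((p.coeff 0 : S) : R) := hcS.resolve_left hcne
          have hdvd : x ∣ ((p.coeff 0 : S) : R) := ⟨-φ p.divX, by linear_combination heval⟩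
          exact hxnu (isUnit_of_dvd_unit hdvd hcu)
        rw [hc0] at hsplit heval
        simp only [map_zero, ZeroMemClass.coe_zero, add_zero] at heval
        have hdivX0 : φ p.divX = 0 := by
          rcases mul_eq_zero.mp heval with h | h
          · exact absurd h hxne
          · exact h
        by_cases hdx : p.divX = 0
        · rw [hdx, mul_zero, zero_add] at hsplit
          rw [← hsplit, map_zero]
        · have hnd : p.natDegree ≠ 0 := by
            intro h0
            have := Polynomial.eq_C_of_natDegree_eq_zero h0
            rw [this, Polynomial.divX_C] at hdx
            exact hdx rfl
          have hlt : p.divX.natDegree < p.natDegree := by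
            rw [Polynomial.natDegree_divX_eq_natDegree_tsub_one]
            omega
          have := ih p.divX.natDegree (by omega) p.divX rfl hdivX0
          exact absurd this hdx
    exact hpne (key p.natDegree p rfl hp)
  exact ⟨S, inferInstance, ⟨(RingEquiv.ofBijective φ ⟨hinj, hsurj⟩).symm⟩⟩
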